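/- Let f⁺, f⁻ : {0,...,N} → ℝ be strictly positive and let U⁺, U⁻ : {0,...,N+1} → ℝ satisfy U⁺(0) = U⁻(0) = 0 and U⁺(k) + U⁻(N-k) = A for all k ∈ {0,...,N} and some constant A ∈ ℝ. Define f̃±(k) = f±(k) · e^{U±(k+1)}/e^{U±(k)}. Then the stationary distributions of the birth-death chains on {0,...,N} with rates (N-k)f⁺(k), k·f⁻(N-k) and with rates (N-k)f̃⁺(k), k·f̃⁻(N-k) coincide. -/

import Mathlib

/-- The gauge freedom `U±` does not change the stationary
distribution of the birth-death chain. -/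
theorem stmt3 (N : ℕ) (hN : 0 < N) (ν : ℝ) (hν : 0 < ν)
    (fp fm : ℕ → ℝ) (hfp : ∀ k ≤ N, 0 < fp k) (hfm : ∀ k ≤ N, 0 < fm k)
    (Up Um : ℕ → ℝ) (hUp0 : Up 0 = 0) (hUm0 : Um 0 = 0)
    (A : ℝ) (hU : ∀ k ≤ N, Up k + Um (N - k) = A)
    (fpt fmt : ℕ → ℝ)
    (hfpt : ∀ k, fpt k = fp k * Real.exp (Up (k + 1)) / Real.exp (Up k))
    (hfmt : ∀ k, fmt k = fm k * Real.exp (Um (k + 1)) / Real.exp (Um k))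
    (p q : ℕ → ℝ)
    (hp0 : ∀ k ≤ N, 0 ≤ p k) (hq0 : ∀ k ≤ N, 0 ≤ q k)
    (hpsum : ∑ k ∈ Finset.range (N + 1), p k = 1)
    (hqsum : ∑ k ∈ Finset.range (N + 1), q k = 1)
    (hpDB : ∀ k, 1 ≤ k → k ≤ N →
      p k * (ν * (k : ℝ) * fm (N - k)) = p (k - 1) * (ν * ((N : ℝ) - k + 1) * fp (k - 1)))
    (hqDB : ∀ k, 1 ≤ k → k ≤ N →
      q k * (ν * (k : ℝ) * fmt (N - k)) = q (k - 1) * (ν * ((N : ℝ) - k + 1) * fpt (k - 1))) :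
    ∀ k ≤ N, p k = q k := by
  set C : ℕ → ℝ := fun k => ∏ i ∈ Finset.range k,
    (((N : ℝ) - i) * fp i) / (((i : ℝ) + 1) * fm (N - (i + 1))) with hC
  have hCpos : ∀ k ≤ N, 0 < C k := by
    intro k hk
    apply Finset.prod_pos
    intro i hi
    simp only [Finset.mem_range] at hi
    have hiN : i < N := lt_of_lt_of_le hi hk
    have hiNr : (i : ℝ) < N := by exact_mod_cast hiN
    apply div_pos
    · exact mul_pos (by linarith) (hfp i hiN.le)
    · exact mul_pos (by positivity) (hfm _ (by omega))
  -- any solution of the detailed balance recursion is determined by its value at 0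
  have hrec : ∀ r : ℕ → ℝ,
      (∀ k, 1 ≤ k → k ≤ N →
        r k * (ν * (k : ℝ) * fm (N - k)) = r (k - 1) * (ν * ((N : ℝ) - k + 1) * fp (k - 1))) →
      ∀ k ≤ N, r k = r 0 * C k := by
    intro r hr k hk
    induction k with
    | zero => simp [hC]
    | succ n ih =>
      have hn : n ≤ N := by omega
      have h1 := hr (n + 1) (by omega) hk
      simp only [Nat.add_sub_cancel] at h1
      have hcast : ((n + 1 : ℕ) : ℝ) = (n : ℝ) + 1 := by push_cast; ring
      rw [hcast] at h1
      have hfmp : 0 < fm (N - (n + 1)) := hfm _ (by omega)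
      have hY : (((n : ℝ) + 1) * fm (N - (n + 1))) ≠ 0 := by positivity
      have h2 : r (n + 1) * (((n : ℝ) + 1) * fm (N - (n + 1)))
          = r n * (((N : ℝ) - n) * fp n) := by
        apply mul_left_cancel₀ hν.ne'
        linear_combination h1
      have h3 : r (n + 1) = r n * ((((N : ℝ) - n) * fp n) /
          (((n : ℝ) + 1) * fm (N - (n + 1)))) := by
        rw [← mul_div_assoc, eq_div_iff hY]
        linear_combination h2
      rw [h3, ih hn, hC]
      simp only [Finset.prod_range_succ]
      ring
  -- q satisfies the same (untilded) detailed balance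
  have hq' : ∀ k, 1 ≤ k → k ≤ N →
      q k * (ν * (k : ℝ) * fm (N - k)) = q (k - 1) * (ν * ((N : ℝ) - k + 1) * fp (k - 1)) := by
    intro k h1 h2
    have h := hqDB k h1 h2
    rw [hfmt, hfpt] at h
    have hk1 : k - 1 + 1 = k := by omega
    rw [hk1] at h
    set a := Real.exp (Up k) with ha
    set b := Real.exp (Up (k - 1)) with hb
    set c := Real.exp (Um (N - k)) with hc
    set d := Real.exp (Um (N - k + 1)) with hd
    have hbpos : 0 < b := Real.exp_pos _
    have hcpos : 0 < c := Real.exp_pos _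
    have hdpos : 0 < d := Real.exp_pos _
    have hacbd : a * c = b * d := by
      rw [ha, hb, hc, hd, ← Real.exp_add, ← Real.exp_add]
      congr 1
      have e1 := hU k h2
      have e2 := hU (k - 1) (by omega)
      have hnat : N - (k - 1) = N - k + 1 := by omega
      rw [hnat] at e2
      linarith
    have hb0 : b ≠ 0 := hbpos.ne'
    have hc0 : c ≠ 0 := hcpos.ne'
    field_simp at h
    have hdb0 : d * b ≠ 0 := by positivity
    apply mul_right_cancel₀ hdb0
    linear_combination ν * h + (q (k - 1) * (ν * ((N : ℝ) - k + 1) * fp (k - 1))) * hacbd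
  have hpC := hrec p hpDB
  have hqC := hrec q hq'
  have hSpos : 0 < ∑ k ∈ Finset.range (N + 1), C k := by
    apply Finset.sum_pos
    · intro i hi
      exact hCpos i (by simp only [Finset.mem_range] at hi; omega)
    · exact ⟨0, by simp⟩
  have hps : p 0 * ∑ k ∈ Finset.range (N + 1), C k = 1 := by
    rw [Finset.mul_sum, ← hpsum]
    exact Finset.sum_congr rfl fun i hi => (hpC i (by simp only [Finset.mem_range] at hi; omega)).symm
  have hqs : q 0 * ∑ k ∈ Finset.range (N + 1), C k = 1 := by
    rw [Finset.mul_sum, ← hqsum]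
    exact Finset.sum_congr rfl fun i hi => (hqC i (by simp only [Finset.mem_range] at hi; omega)).symm
  have h00 : p 0 = q 0 := mul_right_cancel₀ hSpos.ne' (hps.trans hqs.symm)
  intro k hk
  rw [hpC k hk, hqC k hk, h00]
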